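/- Let α ∈ (0,1) be an even-over-odd rational and c > 0, and set c_α = c^{1-α}/(α-1) < 0. The Bregman-Tweedie loss L(x) = ln_{α,c}(c + exp_{α,c}(x)) with exp_{α,c}(x) = ((1-α)(x - c_α))^{1/(1-α)} (odd-root real power) is differentiable at every x ≠ 2c_α, with derivative L'(x) = (exp_{α,c}(x)/(c + exp_{α,c}(x)))^α; moreover c + exp_{α,c}(x) = 0 holds exactly at x = 2c_α. -/

import Mathlib

/-- Real power with an odd-denominator rational exponent, defined on all of ℝ
via odd roots: t^r = sign(t)·|t|^r. -/
noncomputable def oddRpow (t r : ℝ) : ℝ := Real.sign t * |t| ^ r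

/-- exp_{α,c}(x) = ((1-α)(x - c_α))^{1/(1-α)} (odd-root real power). -/
noncomputable def extExpC (α cα x : ℝ) : ℝ := oddRpow ((1 - α) * (x - cα)) (1 / (1 - α))

/-- ln_{α,c}(y) = (y^{1-α} - c^{1-α})/(1-α) (odd-root real power). -/
noncomputable def extLnC (α c y : ℝ) : ℝ := (oddRpow y (1 - α) - c ^ (1 - α)) / (1 - α)

/-- Bregman-Tweedie loss L(x) = ln_{α,c}(c + exp_{α,c}(x)). -/
noncomputable def btLoss (α c cα x : ℝ) : ℝ := extLnC α c (c + extExpC α cα x)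

lemma abs_oddRpow (t p : ℝ) (hp : p ≠ 0) : |oddRpow t p| = |t| ^ p := by
  rcases lt_trichotomy t 0 with h | h | h
  · simp [oddRpow, Real.sign_of_neg h, abs_of_nonneg (Real.rpow_nonneg (abs_nonneg t) p)]
  · simp [oddRpow, h, Real.zero_rpow hp]
  · simp [oddRpow, Real.sign_of_pos h, abs_of_nonneg (Real.rpow_nonneg (abs_nonneg t) p)]

lemma oddRpow_hasDerivAt_ne (p t : ℝ) (ht : t ≠ 0) :
    HasDerivAt (fun s => oddRpow s p) (p * |t| ^ (p - 1)) t := by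
  rcases ht.lt_or_gt with h | h
  · have hneg : HasDerivAt (fun s : ℝ => -s) (-1) t := (hasDerivAt_id t).neg
    have h2 := (Real.hasDerivAt_rpow_const (p := p)
      (Or.inl (by linarith : (0:ℝ) < -t).ne')).comp t hneg
    have h3 := h2.neg
    have h4 : HasDerivAt (fun s : ℝ => -((-s) ^ p)) (p * (-t) ^ (p - 1)) t := by
      refine h3.congr_deriv ?_; symm; ring
    have h5 : HasDerivAt (fun s : ℝ => -((-s) ^ p)) (p * |t| ^ (p - 1)) t := by
      rwa [abs_of_neg h]
    refine h5.congr_of_eventuallyEq ?_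
    filter_upwards [Iio_mem_nhds h] with s hs
    have hs' : s < 0 := hs
    simp [oddRpow, Real.sign_of_neg hs', abs_of_neg hs']
  · have h2 := Real.hasDerivAt_rpow_const (p := p) (Or.inl h.ne')
    have h5 : HasDerivAt (fun s : ℝ => s ^ p) (p * |t| ^ (p - 1)) t := by
      rwa [abs_of_pos h]
    refine h5.congr_of_eventuallyEq ?_
    filter_upwards [Ioi_mem_nhds h] with s hs
    have hs' : (0:ℝ) < s := hs
    simp [oddRpow, Real.sign_of_pos hs', abs_of_pos hs']

lemma oddRpow_hasDerivAt_zero (p : ℝ) (hp : 1 < p) :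
    HasDerivAt (fun s => oddRpow s p) 0 0 := by
  rw [hasDerivAt_iff_tendsto_slope]
  rw [tendsto_zero_iff_abs_tendsto_zero]
  have key : Filter.Tendsto (fun s : ℝ => |s| ^ (p - 1)) (nhdsWithin 0 {(0:ℝ)}ᶜ) (nhds 0) := by
    have hco : ContinuousAt (fun s : ℝ => |s| ^ (p - 1)) 0 := by
      exact (Real.continuousAt_rpow_const _ _ (Or.inr (by linarith))).comp
        continuous_abs.continuousAt
    have := hco.continuousWithinAt (s := {(0:ℝ)}ᶜ)
    simpa [Real.zero_rpow (by linarith : p - 1 ≠ 0), ContinuousWithinAt] using this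
  refine key.congr' ?_
  filter_upwards [self_mem_nhdsWithin] with s hs
  have hs' : s ≠ 0 := hs
  have habs : |s| ≠ 0 := abs_ne_zero.mpr hs'
  have h0 : oddRpow 0 p = 0 := by simp [oddRpow]
  simp only [Function.comp_apply]
  rw [slope_def_field, h0, sub_zero, sub_zero, abs_div, abs_oddRpow _ _ (by linarith)]
  rw [Real.rpow_sub (abs_pos.mpr hs'), Real.rpow_one]

lemma oddRpow_hasDerivAt (p t : ℝ) (hp : 1 < p) :
    HasDerivAt (fun s => oddRpow s p) (p * |t| ^ (p - 1)) t := by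
  rcases eq_or_ne t 0 with rfl | h
  · simpa [Real.zero_rpow (by linarith : p - 1 ≠ 0)] using oddRpow_hasDerivAt_zero p hp
  · exact oddRpow_hasDerivAt_ne p t h

/-- For α ∈ (0,1) an even-over-odd rational and c > 0 with c_α = c^{1-α}/(α-1),
we have c + exp_{α,c}(x) = 0 exactly at x = 2c_α, and the Bregman-Tweedie loss
is differentiable at every x ≠ 2c_α with derivative
L'(x) = (exp_{α,c}(x)/(c + exp_{α,c}(x)))^α (even-type real power |·|^α). -/
theorem stmt17 (k l : ℕ) (α c : ℝ)
    (hα : α = (2 * k : ℝ) / (2 * l + 1 : ℝ)) (h0 : 0 < α) (h1 : α < 1)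
    (hc : 0 < c) :
    let cα : ℝ := c ^ (1 - α) / (α - 1)
    (∀ x : ℝ, c + extExpC α cα x = 0 ↔ x = 2 * cα) ∧
    (∀ x : ℝ, x ≠ 2 * cα → HasDerivAt (btLoss α c cα)
      (|extExpC α cα x / (c + extExpC α cα x)| ^ α) x) := by
  intro cα
  have hβ : (0:ℝ) < 1 - α := by linarith
  set p : ℝ := 1 / (1 - α) with hp_def
  have hp1 : 1 < p := by
    rw [hp_def, lt_div_iff₀ hβ]; linarith
  have hpβ : p * (1 - α) = 1 := by
    rw [hp_def]; field_simp
  have hpm1 : p - 1 = p * α := by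
    have : p * (1 - α) = 1 := hpβ
    nlinarith
  have hcβ : (0:ℝ) < c ^ (1 - α) := Real.rpow_pos_of_pos hc _
  have hα1 : α - 1 ≠ 0 := by linarith
  have hkey : (1 - α) * (2 * cα - cα) = -(c ^ (1 - α)) := by
    show (1 - α) * (2 * (c ^ (1 - α) / (α - 1)) - c ^ (1 - α) / (α - 1)) = -(c ^ (1 - α))
    field_simp
    ring
  -- value at 2cα
  have hval : extExpC α cα (2 * cα) = -c := by
    rw [extExpC, ← hp_def, hkey]
    have hneg : -(c ^ (1 - α)) < 0 := by linarith
    rw [oddRpow, Real.sign_of_neg hneg, abs_of_neg hneg, neg_neg]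
    have hβp : (1 - α) * p = 1 := by rw [mul_comm]; exact hpβ
    rw [← Real.rpow_mul hc.le, hβp, Real.rpow_one]
    ring
  have hiff : ∀ x : ℝ, c + extExpC α cα x = 0 ↔ x = 2 * cα := by
    intro x
    constructor
    · intro hx
      have hE : extExpC α cα x = -c := by linarith
      have hE' : oddRpow ((1 - α) * (x - cα)) p = -c := hE
      set t : ℝ := (1 - α) * (x - cα) with ht_def
      rcases lt_trichotomy t 0 with h | h | h
      · rw [oddRpow, Real.sign_of_neg h, abs_of_neg h] at hE'
        have h1 : (-t) ^ p = c := by linarith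
        have h2 : -t = c ^ (1 - α) := by
          have h3 := congrArg (fun y : ℝ => y ^ (1 - α)) h1
          simp only [← Real.rpow_mul (by linarith : (0:ℝ) ≤ -t)] at h3
          rwa [hpβ, Real.rpow_one] at h3
        have h4 : t = (1 - α) * (2 * cα - cα) := by rw [hkey]; linarith
        have h5 : x - cα = 2 * cα - cα :=
          mul_left_cancel₀ hβ.ne' (ht_def ▸ h4)
        linarith
      · rw [h] at hE'
        simp [oddRpow] at hE'
        linarith
      · rw [oddRpow, Real.sign_of_pos h, abs_of_pos h, one_mul] at hE'
        have := Real.rpow_pos_of_pos h p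
        linarith
    · rintro rfl
      rw [hval]; ring
  refine ⟨hiff, fun x hx => ?_⟩
  have hG0 : c + extExpC α cα x ≠ 0 := fun h => hx ((hiff x).mp h)
  set t : ℝ := (1 - α) * (x - cα) with ht_def
  have hu : HasDerivAt (fun x : ℝ => (1 - α) * (x - cα)) (1 - α) x := by
    simpa using ((hasDerivAt_id x).sub_const cα).const_mul (1 - α)
  have hE : HasDerivAt (fun x => extExpC α cα x) (|t| ^ (p - 1)) x := by
    have h := (oddRpow_hasDerivAt p t hp1).comp x hu
    refine h.congr_deriv ?_; symm
    linear_combination (-(|t| ^ (p - 1))) * hpβ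
  set G : ℝ := c + extExpC α cα x with hG_def
  have hGd : HasDerivAt (fun x => c + extExpC α cα x) (|t| ^ (p - 1)) x := hE.const_add c
  have hF := ((oddRpow_hasDerivAt_ne (1 - α) G hG0).comp x hGd).sub_const
    (c ^ (1 - α)) |>.div_const (1 - α)
  have hbt : btLoss α c cα =
      (fun x => (((fun y => oddRpow y (1 - α)) ∘ fun x => c + extExpC α cα x) x
        - c ^ (1 - α)) / (1 - α)) := rfl
  rw [← hbt] at hF
  refine hF.congr_deriv ?_; symm
  have habsE : |extExpC α cα x| = |t| ^ p := abs_oddRpow t p (by positivity)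
  rw [abs_div, habsE, hG_def,
    Real.div_rpow (Real.rpow_nonneg (abs_nonneg t) p) (abs_nonneg _),
    ← Real.rpow_mul (abs_nonneg t), ← hpm1]
  rw [show (1 - α) - 1 = -α by ring, Real.rpow_neg (abs_nonneg _)]
  field_simp
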